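/- Let c ≥ 0 and β ∈ (0,1] with c > 0 or β < 1, and let F be a Borel probability measure on [0,1] such that β·∫_{[0,1]} x dF(x) > c. Then there exists a unique real number z satisfying z = -c + β·∫_{[0,1]} max(x,z) dF(x), and this z lies in the open interval (0,1). -/

import Mathlib

open MeasureTheory

/-- With frictions (`c > 0` or `β < 1`) and `β·mean(F) > c`, there is a unique
reservation value `z` with `z = -c + β·∫ max(x,z) dF`, and it lies in `(0,1)`. -/
theorem stmt_2 (c β : ℝ) (hc : 0 ≤ c) (hβ : 0 < β) (hβ1 : β ≤ 1)
    (hfric : 0 < c ∨ β < 1)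
    (F : Measure ℝ) [IsProbabilityMeasure F] (hF : F (Set.Icc (0:ℝ) 1)ᶜ = 0)
    (hval : c < β * ∫ x, x ∂F) :
    ∃ z : ℝ, (z = -c + β * ∫ x, max x z ∂F) ∧ z ∈ Set.Ioo (0:ℝ) 1 ∧
      ∀ w : ℝ, (w = -c + β * ∫ x, max x w ∂F) → w = z := by
  have hae : ∀ᵐ x ∂F, x ∈ Set.Icc (0:ℝ) 1 := by
    rw [MeasureTheory.ae_iff]
    exact hF
  set I : ℝ → ℝ := fun z => ∫ x, max x z ∂F with hIdef
  have hInt : ∀ z : ℝ, Integrable (fun x => max x z) F := by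
    intro z
    refine (integrable_const (max 1 |z|)).mono'
      ((continuous_id.max continuous_const).aestronglyMeasurable) ?_
    filter_upwards [hae] with x hx
    rw [Real.norm_eq_abs, abs_le]
    refine ⟨?_, max_le (hx.2.trans (le_max_left _ _)) ((le_abs_self z).trans (le_max_right _ _))⟩
    have h0 : (0:ℝ) ≤ max x z := le_trans hx.1 (le_max_left _ _)
    have : (0:ℝ) ≤ max 1 |z| := le_trans zero_le_one (le_max_left _ _)
    linarith
  -- monotonicity and 1-Lipschitz bound
  have hle : ∀ u v : ℝ, u ≤ v → I u ≤ I v ∧ I v ≤ I u + (v - u) := by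
    intro u v huv
    constructor
    · exact integral_mono (hInt u) (hInt v) fun x => max_le_max le_rfl huv
    · have h1 : I v ≤ ∫ x, (max x u + (v - u)) ∂F := by
        refine integral_mono (hInt v) ((hInt u).add (integrable_const _)) fun x => ?_
        rcases le_total x v with h | h
        · have : max x v = max x v := rfl
          have hxv : max x v ≤ v := max_le h le_rfl
          have : u ≤ max x u := le_max_right _ _
          simp only [Pi.add_apply]
          linarith
        · have hxv : max x v = x := max_eq_left h
          have : x ≤ max x u := le_max_left _ _
          simp only [Pi.add_apply]
          linarith
      rwa [integral_add (hInt u) (integrable_const _), integral_const, probReal_univ,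
        one_smul] at h1
  have hcont : Continuous I := by
    have key : ∀ u v : ℝ, I u - I v ≤ |u - v| := by
      intro u v
      rcases le_total u v with h | h
      · have := (hle u v h).1
        have h0 : (0:ℝ) ≤ |u - v| := abs_nonneg _
        linarith
      · have := (hle v u h).2
        have h0 : u - v ≤ |u - v| := le_abs_self _
        linarith
    have hlip : LipschitzWith 1 I := by
      apply LipschitzWith.of_dist_le_mul
      intro u v
      rw [Real.dist_eq, Real.dist_eq, NNReal.coe_one, one_mul, abs_sub_le_iff]
      exact ⟨key u v, by rw [abs_sub_comm]; exact key v u⟩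
    exact hlip.continuous
  have hI0 : I 0 = ∫ x, x ∂F := by
    refine integral_congr_ae ?_
    filter_upwards [hae] with x hx
    exact max_eq_left hx.1
  have hI1 : I 1 = 1 := by
    have h : I 1 = ∫ _x, (1:ℝ) ∂F := by
      refine integral_congr_ae ?_
      filter_upwards [hae] with x hx
      exact max_eq_right hx.2
    simp [h]
  -- the function whose zero is the reservation value
  set f : ℝ → ℝ := fun z => -c + β * I z - z with hfdef
  have hfc : ContinuousOn f (Set.Icc (0:ℝ) 1) :=
    ((continuous_const.add (continuous_const.mul hcont)).sub continuous_id).continuousOn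
  have hf0 : 0 < f 0 := by
    simp only [hfdef, hI0]
    linarith
  have hf1 : f 1 < 0 := by
    simp only [hfdef, hI1, mul_one]
    rcases hfric with h | h <;> linarith
  have hmem : (0:ℝ) ∈ Set.Ioo (f 1) (f 0) := ⟨hf1, hf0⟩
  obtain ⟨z, hzmem, hz0⟩ := intermediate_value_Ioo' (le_of_lt one_pos) hfc hmem
  have hzfix : z = -c + β * I z := by
    simp only [hfdef] at hz0
    linarith
  -- uniqueness key lemma
  have key : ∀ u v : ℝ, u = -c + β * I u → v = -c + β * I v → ¬ u < v := by
    intro u v hu hv huv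
    have hnn : 0 ≤ I v - I u := by linarith [(hle u v huv.le).1]
    have hub : I v - I u ≤ v - u := by linarith [(hle u v huv.le).2]
    have hd : v - u = β * (I v - I u) := by rw [mul_sub]; linarith
    rcases lt_or_eq_of_le hβ1 with hβlt | hβeq
    · nlinarith
    · -- β = 1, so c > 0 by hfric
      have hc0 : 0 < c := by
        rcases hfric with h | h
        · exact h
        · rw [hβeq] at h; linarith
      rw [hβeq, one_mul] at hd hu
      -- a.e. argument
      set g : ℝ → ℝ := fun x => (max x u + (v - u)) - max x v with hgdef
      have hgnn : ∀ x, 0 ≤ g x := by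
        intro x
        simp only [hgdef]
        rcases le_total x v with h | h
        · have h1 : max x v ≤ v := max_le h le_rfl
          have h2 : u ≤ max x u := le_max_right _ _
          linarith
        · have h1 : max x v = x := max_eq_left h
          have h2 : x ≤ max x u := le_max_left _ _
          linarith
      have hgint : Integrable g F := ((hInt u).add (integrable_const _)).sub (hInt v)
      have hgzero : ∫ x, g x ∂F = 0 := by
        have e1 := integral_sub ((hInt u).add (integrable_const (v - u))) (hInt v)
        have e2 := integral_add (hInt u) (integrable_const (v - u))
        simp only [Pi.add_apply, integral_const, probReal_univ,
          one_smul] at e1 e2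
        have hIv : I v = I u + (v - u) := by linarith
        simp only [hIdef] at hIv
        simp only [hgdef]
        rw [e1, e2]
        linarith
      have hgeq : g =ᵐ[F] 0 :=
        (integral_eq_zero_iff_of_nonneg hgnn hgint).mp hgzero
      have haeleu : ∀ᵐ x ∂F, x ≤ u := by
        filter_upwards [hgeq] with x hx
        by_contra hxu
        push_neg at hxu
        have h1 : max x u = x := max_eq_left hxu.le
        have h2 : max x v < x + (v - u) := by
          rcases le_total v x with h | h
          · rw [max_eq_left h]; linarith
          · rw [max_eq_right h]; linarith
        simp only [hgdef, Pi.zero_apply, h1] at hx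
        linarith
      have hIu : I u = u := by
        have h : I u = ∫ _x, u ∂F := by
          refine integral_congr_ae ?_
          filter_upwards [haeleu] with x hx
          exact max_eq_right hx
        simp [h]
      rw [hIu] at hu
      linarith
  refine ⟨z, ?_, hzmem, ?_⟩
  · exact hzfix
  · intro w hw
    rcases lt_trichotomy w z with h | h | h
    · exact absurd h (key w z hw hzfix)
    · exact h
    · exact absurd h (key z w hzfix hw)
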